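/- Let X, Y be Banach spaces and u : [0,∞) → L(X;Y). If for every x ∈ X there exists t_x ≥ 0 such that the orbit t ↦ u(t)x is absolutely continuous on (t_x,∞), then there exists t₀ ≥ 0 such that every orbit is absolutely continuous on (t₀,∞). -/

import Mathlib

/-- `f` is absolutely continuous on the open half line `(a, ∞)`: for every `ε > 0`
there is `δ > 0` such that for every finite collection of pairwise disjoint
subintervals `(aₖ, bₖ)` of `(a, ∞)` of total length `< δ`, the sum
`Σ ‖f bₖ - f aₖ‖` is `< ε`. -/
def AbsolutelyContinuousOnIoi {Y : Type*} [NormedAddCommGroup Y]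
    (f : ℝ → Y) (t : ℝ) : Prop :=
  ∀ ε > (0:ℝ), ∃ δ > (0:ℝ), ∀ (n : ℕ) (a b : Fin n → ℝ),
    (∀ k, t < a k ∧ a k < b k) →
    (∀ i j, i ≠ j → Disjoint (Set.Ioo (a i) (b i)) (Set.Ioo (a j) (b j))) →
    (∑ k, (b k - a k)) < δ →
    (∑ k, ‖f (b k) - f (a k)‖) < ε

private lemma absc_smul {Y : Type*} [NormedAddCommGroup Y] [NormedSpace ℝ Y]
    {f : ℝ → Y} {s : ℝ} (hf : AbsolutelyContinuousOnIoi f s) (cc : ℝ) :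
    AbsolutelyContinuousOnIoi (fun r => cc • f r) s := by
  intro ε hε
  obtain ⟨δ, hδ, H⟩ := hf (ε / (|cc| + 1)) (by positivity)
  refine ⟨δ, hδ, fun n a b h1 h2 h3 => ?_⟩
  have hH := H n a b h1 h2 h3
  have hs : ∀ k : Fin n, ‖cc • f (b k) - cc • f (a k)‖ = |cc| * ‖f (b k) - f (a k)‖ := by
    intro k; rw [← smul_sub, norm_smul, Real.norm_eq_abs]
  have h0 : (0:ℝ) ≤ |cc| := abs_nonneg cc
  have hS0 : (0:ℝ) ≤ ∑ k, ‖f (b k) - f (a k)‖ := Finset.sum_nonneg fun k _ => norm_nonneg _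
  have hmul : (∑ k, ‖f (b k) - f (a k)‖) * (|cc| + 1) < ε :=
    (lt_div_iff₀ (by positivity)).1 hH
  calc (∑ k, ‖cc • f (b k) - cc • f (a k)‖)
      = |cc| * ∑ k, ‖f (b k) - f (a k)‖ := by
        rw [Finset.mul_sum]; exact Finset.sum_congr rfl fun k _ => hs k
    _ < ε := by nlinarith

set_option maxHeartbeats 2000000 in
/-- Individually eventually absolutely continuous implies uniformly eventually
absolutely continuous. -/
theorem eventually_absolutely_continuous_individual_implies_uniform
    {X Y : Type*} [NormedAddCommGroup X] [NormedSpace ℝ X] [CompleteSpace X]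
    [NormedAddCommGroup Y] [NormedSpace ℝ Y] [CompleteSpace Y]
    (u : ℝ → X →L[ℝ] Y)
    (h : ∀ x : X, ∃ tx : ℝ, 0 ≤ tx ∧
      AbsolutelyContinuousOnIoi (fun t : ℝ => u t x) tx) :
    ∃ t₀ : ℝ, 0 ≤ t₀ ∧ ∀ x : X,
      AbsolutelyContinuousOnIoi (fun t : ℝ => u t x) t₀ := by
  classical
  by_contra hcon
  push_neg at hcon
  choose τ hτ0 hτAC using h
  -- Step 0: from the (negated) conclusion, for every `s ≥ 0` produce a normalized bad vector.
  have key : ∀ s : ℝ, ∃ (x : X) (ε : ℝ), ‖x‖ ≤ 1 ∧ 0 < ε ∧ (0 ≤ s →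
      ∀ δ : ℝ, 0 < δ → ∃ (K : ℕ) (a b : Fin K → ℝ),
        (∀ k, s < a k ∧ a k < b k) ∧
        (∀ i j, i ≠ j → Disjoint (Set.Ioo (a i) (b i)) (Set.Ioo (a j) (b j))) ∧
        (∑ k, (b k - a k)) < δ ∧ ε ≤ ∑ k, ‖u (b k) x - u (a k) x‖) := by
    intro s
    by_cases hs : 0 ≤ s
    · obtain ⟨x, hx⟩ := hcon s hs
      have hx0 : x ≠ 0 := by
        rintro rfl
        exact hx fun ε hε => ⟨1, one_pos, fun n a b _ _ _ => by simpa using hε⟩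
      have hnx : (0:ℝ) < ‖x‖ := norm_pos_iff.2 hx0
      have hy : ¬ AbsolutelyContinuousOnIoi (fun r => u r (‖x‖⁻¹ • x)) s := by
        intro hy
        apply hx
        have h2 := absc_smul hy ‖x‖
        have he : (fun r => ‖x‖ • (u r (‖x‖⁻¹ • x))) = fun r : ℝ => u r x := by
          funext r
          rw [map_smul, smul_smul, mul_inv_cancel₀ (ne_of_gt hnx), one_smul]
        rwa [he] at h2
      rw [AbsolutelyContinuousOnIoi] at hy
      push_neg at hy
      obtain ⟨ε, hε, H⟩ := hy
      refine ⟨‖x‖⁻¹ • x, ε, le_of_eq ?_, hε, fun _ δ hδ => ?_⟩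
      · rw [norm_smul, norm_inv, norm_norm, inv_mul_cancel₀ (ne_of_gt hnx)]
      · obtain ⟨K, a, b, h1, h2, h3, h4⟩ := H δ hδ
        exact ⟨K, a, b, h1, h2, h3, h4⟩
    · exact ⟨0, 1, by simp, one_pos, fun h0 => absurd h0 hs⟩
  choose ξ εf hξ hεf hbad using key
  -- Step 1: Baire category.
  have hbaire : ∃ (NN jj : ℕ) (x₀ : X) (r : ℝ), 0 < r ∧
      ∀ y : X, dist y x₀ < r → ∀ (K : ℕ) (a b : Fin K → ℝ),
        (∀ k, (NN:ℝ) < a k ∧ a k < b k) →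
        (∀ i j, i ≠ j → Disjoint (Set.Ioo (a i) (b i)) (Set.Ioo (a j) (b j))) →
        (∑ k, (b k - a k)) < 1/((jj:ℝ)+1) →
        (∑ k, ‖u (b k) y - u (a k) y‖) ≤ 1 := by
    set A : ℕ × ℕ → Set X := fun pq => {x | ∀ (K : ℕ) (a b : Fin K → ℝ),
        (∀ k, (pq.1:ℝ) < a k ∧ a k < b k) →
        (∀ i j, i ≠ j → Disjoint (Set.Ioo (a i) (b i)) (Set.Ioo (a j) (b j))) →
        (∑ k, (b k - a k)) < 1/((pq.2:ℝ)+1) →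
        (∑ k, ‖u (b k) x - u (a k) x‖) ≤ 1} with hA
    have hclosed : ∀ pq, IsClosed (A pq) := by
      intro pq
      have he : A pq = ⋂ (K : ℕ), ⋂ (a : Fin K → ℝ), ⋂ (b : Fin K → ℝ),
          ⋂ (_ : (∀ k, (pq.1:ℝ) < a k ∧ a k < b k) ∧
            (∀ i j, i ≠ j → Disjoint (Set.Ioo (a i) (b i)) (Set.Ioo (a j) (b j))) ∧
            (∑ k, (b k - a k)) < 1/((pq.2:ℝ)+1)),
          {x : X | (∑ k, ‖u (b k) x - u (a k) x‖) ≤ 1} := by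
        ext x
        simp only [hA, Set.mem_setOf_eq, Set.mem_iInter]
        constructor
        · rintro hx K a b ⟨h1, h2, h3⟩; exact hx K a b h1 h2 h3
        · intro hx K a b h1 h2 h3; exact hx K a b ⟨h1, h2, h3⟩
      rw [he]
      exact isClosed_iInter fun K => isClosed_iInter fun a => isClosed_iInter fun b =>
        isClosed_iInter fun _ => isClosed_le
          (continuous_finset_sum _ fun k _ =>
            ((u (b k)).continuous.sub (u (a k)).continuous).norm)
          continuous_const
    have hcover : ⋃ pq, A pq = Set.univ := by
      rw [Set.iUnion_eq_univ_iff]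
      intro x
      obtain ⟨δ, hδ, H⟩ := hτAC x 1 one_pos
      obtain ⟨j, hj⟩ := exists_nat_one_div_lt hδ
      refine ⟨(⌈τ x⌉₊, j), ?_⟩
      simp only [hA, Set.mem_setOf_eq]
      intro K a b h1 h2 h3
      exact (H K a b
        (fun k => ⟨lt_of_le_of_lt (Nat.le_ceil (τ x)) (h1 k).1, (h1 k).2⟩)
        h2 (h3.trans hj)).le
    obtain ⟨pq, hpq⟩ := nonempty_interior_of_iUnion_of_closed hclosed hcover
    obtain ⟨x₀, hx₀⟩ := hpq
    rw [mem_interior_iff_mem_nhds, Metric.mem_nhds_iff] at hx₀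
    obtain ⟨r, hr, hball⟩ := hx₀
    refine ⟨pq.1, pq.2, x₀, r, hr, fun y hy K a b h1 h2 h3 => ?_⟩
    have hyA := hball (Metric.mem_ball.2 hy)
    simp only [hA, Set.mem_setOf_eq] at hyA
    exact hyA K a b h1 h2 h3
  obtain ⟨NN, jj, x₀, r, hr, hball⟩ := hbaire
  have h4r : (0:ℝ) < 4/r := by positivity
  set C : ℝ := 4/r + 1 with hCdef
  have hCpos : (0:ℝ) < C := by positivity
  -- Step 2: uniform bound.
  have hCb : ∀ (y : X) (K : ℕ) (a b : Fin K → ℝ),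
      (∀ k, (NN:ℝ) < a k ∧ a k < b k) →
      (∀ i j, i ≠ j → Disjoint (Set.Ioo (a i) (b i)) (Set.Ioo (a j) (b j))) →
      (∑ k, (b k - a k)) < 1/((jj:ℝ)+1) →
      (∑ k, ‖u (b k) y - u (a k) y‖) ≤ 4/r * ‖y‖ := by
    intro y K a b h1 h2 h3
    rcases eq_or_ne y 0 with rfl | hy0
    · simp
    · have hny : (0:ℝ) < ‖y‖ := norm_pos_iff.2 hy0
      set z := (r/(2*‖y‖)) • y with hzdef
      have hrz : (0:ℝ) < r/(2*‖y‖) := by positivity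
      have hnz : ‖z‖ = r/2 := by
        rw [hzdef, norm_smul, Real.norm_eq_abs, abs_of_pos hrz]
        field_simp
      have h1z : dist (x₀ + z) x₀ < r := by
        rw [dist_eq_norm, add_sub_cancel_left, hnz]; linarith
      have H1 := hball (x₀ + z) h1z K a b h1 h2 h3
      have H0 := hball x₀ (by simpa using hr) K a b h1 h2 h3
      have hz2 : (∑ k, ‖u (b k) z - u (a k) z‖) ≤ 2 := by
        have hk : ∀ k : Fin K, ‖u (b k) z - u (a k) z‖ ≤
            ‖u (b k) (x₀+z) - u (a k) (x₀+z)‖ + ‖u (b k) x₀ - u (a k) x₀‖ := by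
          intro k
          have he : u (b k) z - u (a k) z =
              (u (b k) (x₀+z) - u (a k) (x₀+z)) - (u (b k) x₀ - u (a k) x₀) := by
            simp only [map_add]; abel
          rw [he]; exact norm_sub_le _ _
        calc (∑ k, ‖u (b k) z - u (a k) z‖)
            ≤ ∑ k, (‖u (b k) (x₀+z) - u (a k) (x₀+z)‖ + ‖u (b k) x₀ - u (a k) x₀‖) :=
              Finset.sum_le_sum fun k _ => hk k
          _ = (∑ k, ‖u (b k) (x₀+z) - u (a k) (x₀+z)‖) + ∑ k, ‖u (b k) x₀ - u (a k) x₀‖ :=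
              Finset.sum_add_distrib
          _ ≤ 2 := by linarith
      have hone : (2*‖y‖/r) * (r/(2*‖y‖)) = 1 := by field_simp
      calc (∑ k, ‖u (b k) y - u (a k) y‖)
          = ∑ k, (2*‖y‖/r) * ‖u (b k) z - u (a k) z‖ := by
            refine Finset.sum_congr rfl fun k _ => ?_
            rw [hzdef, map_smul, map_smul, ← smul_sub, norm_smul, Real.norm_eq_abs,
              abs_of_pos hrz, ← mul_assoc, hone, one_mul]
        _ = (2*‖y‖/r) * ∑ k, ‖u (b k) z - u (a k) z‖ := (Finset.mul_sum _ _ _).symm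
        _ ≤ (2*‖y‖/r) * 2 := mul_le_mul_of_nonneg_left hz2 (by positivity)
        _ = 4/r * ‖y‖ := by ring
  have hξC : ∀ (s : ℝ) (K : ℕ) (a b : Fin K → ℝ),
      (∀ k, (NN:ℝ) < a k ∧ a k < b k) →
      (∀ i j, i ≠ j → Disjoint (Set.Ioo (a i) (b i)) (Set.Ioo (a j) (b j))) →
      (∑ k, (b k - a k)) < 1/((jj:ℝ)+1) →
      (∑ k, ‖u (b k) (ξ s) - u (a k) (ξ s)‖) ≤ C := by
    intro s K a b h1 h2 h3
    refine (hCb (ξ s) K a b h1 h2 h3).trans ?_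
    have hh := mul_le_mul_of_nonneg_left (hξ s) h4r.le
    rw [mul_one] at hh
    rw [hCdef]; linarith
  -- Step 3: the recursive sequences.
  let t : ℕ → ℝ := fun n => Nat.rec (max (NN:ℝ) 0) (fun _ tk => max (tk + 1) (τ (ξ tk) + 1)) n
  have ht0 : t 0 = max (NN:ℝ) 0 := rfl
  have htsucc : ∀ n, t (n+1) = max (t n + 1) (τ (ξ (t n)) + 1) := fun n => rfl
  let c : ℕ → ℝ := fun n => Nat.rec (1:ℝ) (fun k ck => min (ck/2) (ck * εf (t k) / (16*C))) n
  have hc0 : c 0 = 1 := rfl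
  have hcsucc : ∀ n, c (n+1) = min (c n/2) (c n * εf (t n) / (16*C)) := fun n => rfl
  have htstep : ∀ n, t n + 1 ≤ t (n+1) := fun n => by rw [htsucc]; exact le_max_left _ _
  have htnn : ∀ n, 0 ≤ t n ∧ (NN:ℝ) ≤ t n := by
    intro n; induction n with
    | zero => rw [ht0]; exact ⟨le_max_right _ _, le_max_left _ _⟩
    | succ k ih =>
      have := htstep k
      exact ⟨by linarith [ih.1], by linarith [ih.2]⟩
  have hτstep : ∀ n, τ (ξ (t n)) < t (n+1) := fun n => by
    rw [htsucc]; exact lt_of_lt_of_le (lt_add_one _) (le_max_right _ _)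
  have htmono : Monotone t := monotone_nat_of_le_succ fun n => by linarith [htstep n]
  have htlin : ∀ n : ℕ, t 0 + n ≤ t n := by
    intro n; induction n with
    | zero => simp
    | succ k ih =>
      have := htstep k
      push_cast
      push_cast at ih
      linarith
  have hcpos : ∀ n, 0 < c n := by
    intro n; induction n with
    | zero => rw [hc0]; exact one_pos
    | succ k ih =>
      rw [hcsucc]
      exact lt_min (by linarith)
        (div_pos (mul_pos ih (hεf (t k))) (mul_pos (by norm_num) hCpos))
  have hchalf : ∀ n, c (n+1) ≤ c n / 2 := fun n => by rw [hcsucc]; exact min_le_left _ _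
  have hcε : ∀ n, c (n+1) ≤ c n * εf (t n) / (16*C) := fun n => by
    rw [hcsucc]; exact min_le_right _ _
  have hcgeo : ∀ n i : ℕ, c (n + i) ≤ c n * (1/2)^i := by
    intro n i; induction i with
    | zero => simp
    | succ k ih =>
      have h1 : c (n + (k+1)) ≤ c (n + k) / 2 := hchalf (n + k)
      have h2 : (0:ℝ) < (1/2:ℝ)^k := by positivity
      calc c (n + (k+1)) ≤ c (n+k)/2 := h1
        _ ≤ (c n * (1/2)^k)/2 := by linarith
        _ = c n * (1/2)^(k+1) := by rw [pow_succ]; ring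
  have hcsum : Summable c := by
    have hle : ∀ n, c n ≤ (1/2:ℝ)^n := by
      intro n; have := hcgeo 0 n; rwa [zero_add, hc0, one_mul] at this
    exact Summable.of_nonneg_of_le (fun n => (hcpos n).le) hle summable_geometric_two
  have hctail : ∀ n : ℕ, (∑' i : ℕ, c (i + (n+1))) ≤ 2 * c (n+1) := by
    intro n
    have hs : Summable (fun i => c (i + (n+1))) := (summable_nat_add_iff (n+1)).2 hcsum
    calc (∑' i : ℕ, c (i + (n+1))) ≤ ∑' i : ℕ, c (n+1) * (1/2)^i := by
          refine Summable.tsum_le_tsum (fun i => ?_) hs (summable_geometric_two.mul_left _)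
          have := hcgeo (n+1) i
          rwa [add_comm (n+1) i] at this
      _ = c (n+1) * 2 := by rw [tsum_mul_left, tsum_geometric_two]
      _ = 2 * c (n+1) := by ring
  -- Step 4: the gliding-hump vector.
  have hxsum : Summable (fun m => c m • ξ (t m)) := by
    refine Summable.of_norm_bounded hcsum fun m => ?_
    rw [norm_smul, Real.norm_eq_abs, abs_of_pos (hcpos m)]
    calc c m * ‖ξ (t m)‖ ≤ c m * 1 := mul_le_mul_of_nonneg_left (hξ (t m)) (hcpos m).le
      _ = c m := mul_one _
  set x := ∑' m, c m • ξ (t m) with hxdef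
  obtain ⟨n, hn1, hτn⟩ : ∃ n : ℕ, 1 ≤ n ∧ τ x < t n := by
    refine ⟨⌈τ x⌉₊ + 1, Nat.le_add_left 1 _, ?_⟩
    have h1 := htlin (⌈τ x⌉₊ + 1)
    have h2 : τ x ≤ (⌈τ x⌉₊ : ℝ) := Nat.le_ceil _
    have h3 : 0 ≤ t 0 := (htnn 0).1
    push_cast at h1
    linarith
  have hεn : 0 < εf (t n) := hεf (t n)
  have hcn : 0 < c n := hcpos n
  obtain ⟨δ₁, hδ₁, Hx⟩ := hτAC x (c n * εf (t n) / 2) (div_pos (mul_pos hcn hεn) two_pos)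
  have hsm : ∀ m : ℕ, 0 < c n * εf (t n) / (8 * 2^(m+1) * c m) := fun m =>
    div_pos (mul_pos hcn hεn)
      (mul_pos (mul_pos (by norm_num) (pow_pos two_pos _)) (hcpos m))
  choose δA hδApos hδA using fun m =>
    hτAC (ξ (t m)) (c n * εf (t n) / (8 * 2^(m+1) * c m)) (hsm m)
  have hrange : (Finset.range n).Nonempty := Finset.nonempty_range_iff.2 (by omega)
  set δ₂ := (Finset.range n).inf' hrange δA with hδ₂def
  have hδ₂pos : 0 < δ₂ := (Finset.lt_inf'_iff hrange).2 fun m _ => hδApos m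
  have hδ₂le : ∀ m, m < n → δ₂ ≤ δA m := fun m hm =>
    Finset.inf'_le δA (Finset.mem_range.2 hm)
  set δ := min (min δ₁ (1/((jj:ℝ)+1))) δ₂ with hδdef
  have hδpos : 0 < δ := lt_min (lt_min hδ₁ (by positivity)) hδ₂pos
  obtain ⟨K, a, b, hab, hdisj, hlen, hlow⟩ := hbad (t n) (htnn n).1 δ hδpos
  have hlenδ₁ : (∑ k, (b k - a k)) < δ₁ :=
    lt_of_lt_of_le hlen ((min_le_left _ _).trans (min_le_left _ _))
  have hlenjj : (∑ k, (b k - a k)) < 1/((jj:ℝ)+1) :=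
    lt_of_lt_of_le hlen ((min_le_left _ _).trans (min_le_right _ _))
  have hlenδ₂ : (∑ k, (b k - a k)) < δ₂ := lt_of_lt_of_le hlen (min_le_right _ _)
  have habN : ∀ k, (NN:ℝ) < a k ∧ a k < b k := fun k =>
    ⟨lt_of_le_of_lt (htnn n).2 (hab k).1, (hab k).2⟩
  have habτm : ∀ m, m < n → ∀ k, τ (ξ (t m)) < a k ∧ a k < b k := by
    intro m hm k
    refine ⟨lt_of_lt_of_le (hτstep m) ((htmono (by omega : m+1 ≤ n)).trans (hab k).1.le), (hab k).2⟩
  have habτx : ∀ k, τ x < a k ∧ a k < b k := fun k => ⟨lt_trans hτn (hab k).1, (hab k).2⟩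
  -- the key quantities
  have hVC : ∀ m : ℕ, (∑ k, ‖u (b k) (ξ (t m)) - u (a k) (ξ (t m))‖) ≤ C :=
    fun m => hξC (t m) K a b habN hdisj hlenjj
  have hVsmall : ∀ m, m < n → (∑ k, ‖u (b k) (ξ (t m)) - u (a k) (ξ (t m))‖) ≤
      c n * εf (t n) / (8 * 2^(m+1) * c m) := by
    intro m hm
    exact (hδA m K a b (habτm m hm) hdisj (lt_of_lt_of_le hlenδ₂ (hδ₂le m hm))).le
  have hVn : εf (t n) ≤ ∑ k, ‖u (b k) (ξ (t n)) - u (a k) (ξ (t n))‖ := hlow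
  have hSx : (∑ k, ‖u (b k) x - u (a k) x‖) < c n * εf (t n) / 2 :=
    Hx K a b habτx hdisj hlenδ₁
  -- Step 5: the lower estimate on the variation of the orbit of `x` over the family.
  have hunorm : ∀ (k : Fin K) (m : ℕ),
      ‖c m • (u (b k) (ξ (t m)) - u (a k) (ξ (t m)))‖ ≤ (‖u (b k)‖ + ‖u (a k)‖) * c m := by
    intro k m
    rw [norm_smul, Real.norm_eq_abs, abs_of_pos (hcpos m)]
    have h1 : ‖u (b k) (ξ (t m)) - u (a k) (ξ (t m))‖ ≤ ‖u (b k)‖ + ‖u (a k)‖ := by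
      refine le_trans (norm_sub_le _ _) ?_
      have e1 := (u (b k)).le_opNorm (ξ (t m))
      have e2 := (u (a k)).le_opNorm (ξ (t m))
      have e3 := hξ (t m)
      nlinarith [norm_nonneg (u (b k)), norm_nonneg (u (a k))]
    calc c m * ‖u (b k) (ξ (t m)) - u (a k) (ξ (t m))‖
        ≤ c m * (‖u (b k)‖ + ‖u (a k)‖) := mul_le_mul_of_nonneg_left h1 (hcpos m).le
      _ = (‖u (b k)‖ + ‖u (a k)‖) * c m := mul_comm _ _
  have hWsum : ∀ k : Fin K,
      Summable (fun m => c m • (u (b k) (ξ (t m)) - u (a k) (ξ (t m)))) := fun k =>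
    Summable.of_norm_bounded (hcsum.mul_left _) (hunorm k)
  have hGk : ∀ k : Fin K, Summable (fun m =>
      if m = n then (0:ℝ) else c m * ‖u (b k) (ξ (t m)) - u (a k) (ξ (t m))‖) := by
    intro k
    refine Summable.of_nonneg_of_le (fun m => ?_) (fun m => ?_) (hcsum.mul_left (‖u (b k)‖ + ‖u (a k)‖))
    · split
      · exact le_refl 0
      · exact mul_nonneg (hcpos m).le (norm_nonneg _)
    · split
      · exact mul_nonneg (by positivity) (hcpos m).le
      · have := hunorm k m
        rw [norm_smul, Real.norm_eq_abs, abs_of_pos (hcpos m)] at this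
        exact this
  have hsmul2 : ∀ (s : ℝ), Summable (fun m => c m • u s (ξ (t m))) := by
    intro s
    refine Summable.of_norm_bounded (g := fun m => ‖u s‖ * c m) (hcsum.mul_left _) fun m => ?_
    rw [norm_smul, Real.norm_eq_abs, abs_of_pos (hcpos m)]
    have e1 : ‖u s (ξ (t m))‖ ≤ ‖u s‖ :=
      le_trans ((u s).le_opNorm _) (by nlinarith [hξ (t m), norm_nonneg (u s)])
    calc c m * ‖u s (ξ (t m))‖ ≤ c m * ‖u s‖ := mul_le_mul_of_nonneg_left e1 (hcpos m).le
      _ = ‖u s‖ * c m := mul_comm _ _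
  have hΔ : ∀ k : Fin K, u (b k) x - u (a k) x =
      ∑' m, c m • (u (b k) (ξ (t m)) - u (a k) (ξ (t m))) := by
    intro k
    rw [hxdef, ContinuousLinearMap.map_tsum _ hxsum, ContinuousLinearMap.map_tsum _ hxsum]
    simp only [map_smul]
    rw [← Summable.tsum_sub (hsmul2 (b k)) (hsmul2 (a k))]
    exact tsum_congr fun m => (smul_sub _ _ _).symm
  have hkey : ∀ k : Fin K,
      c n * ‖u (b k) (ξ (t n)) - u (a k) (ξ (t n))‖ -
        (∑' m, if m = n then (0:ℝ) else c m * ‖u (b k) (ξ (t m)) - u (a k) (ξ (t m))‖)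
      ≤ ‖u (b k) x - u (a k) x‖ := by
    intro k
    set W : ℕ → Y := fun m => c m • (u (b k) (ξ (t m)) - u (a k) (ξ (t m))) with hWdef
    have hWs : Summable W := hWsum k
    have hsplit := Summable.tsum_eq_add_tsum_ite hWs n
    have hite : ∀ m, ‖if m = n then (0:Y) else W m‖ =
        if m = n then (0:ℝ) else c m * ‖u (b k) (ξ (t m)) - u (a k) (ξ (t m))‖ := by
      intro m
      split
      · simp
      · rw [hWdef, norm_smul, Real.norm_eq_abs, abs_of_pos (hcpos m)]
    have hRs : Summable (fun m => ‖if m = n then (0:Y) else W m‖) :=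
      (hGk k).congr fun m => (hite m).symm
    have hR : ‖∑' m, if m = n then (0:Y) else W m‖ ≤
        ∑' m, if m = n then (0:ℝ) else c m * ‖u (b k) (ξ (t m)) - u (a k) (ξ (t m))‖ := by
      refine le_trans (norm_tsum_le_tsum_norm hRs) (le_of_eq (tsum_congr hite))
    have hWn : ‖W n‖ = c n * ‖u (b k) (ξ (t n)) - u (a k) (ξ (t n))‖ := by
      rw [hWdef, norm_smul, Real.norm_eq_abs, abs_of_pos hcn]
    have htri : ‖W n‖ - ‖∑' m, if m = n then (0:Y) else W m‖ ≤
        ‖W n + ∑' m, if m = n then (0:Y) else W m‖ := by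
      have := norm_sub_norm_le (W n) (-(∑' m, if m = n then (0:Y) else W m))
      rw [norm_neg, sub_neg_eq_add] at this
      exact this
    calc c n * ‖u (b k) (ξ (t n)) - u (a k) (ξ (t n))‖ -
          (∑' m, if m = n then (0:ℝ) else c m * ‖u (b k) (ξ (t m)) - u (a k) (ξ (t m))‖)
        ≤ ‖W n‖ - ‖∑' m, if m = n then (0:Y) else W m‖ := by rw [hWn]; linarith [hR]
      _ ≤ ‖W n + ∑' m, if m = n then (0:Y) else W m‖ := htri
      _ = ‖∑' m, W m‖ := by rw [← hsplit]
      _ = ‖u (b k) x - u (a k) x‖ := by rw [hΔ k]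
  -- sum the key estimate over the family
  have hsum1 : c n * (∑ k, ‖u (b k) (ξ (t n)) - u (a k) (ξ (t n))‖) -
      (∑ k, ∑' m, if m = n then (0:ℝ) else c m * ‖u (b k) (ξ (t m)) - u (a k) (ξ (t m))‖)
      ≤ ∑ k, ‖u (b k) x - u (a k) x‖ := by
    have hsk := Finset.sum_le_sum (fun k (_ : k ∈ Finset.univ) => hkey k)
    rw [Finset.sum_sub_distrib, ← Finset.mul_sum] at hsk
    exact hsk
  have hswap : (∑ k, ∑' m, if m = n then (0:ℝ) else c m * ‖u (b k) (ξ (t m)) - u (a k) (ξ (t m))‖)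
      = ∑' m, ∑ k, (if m = n then (0:ℝ) else c m * ‖u (b k) (ξ (t m)) - u (a k) (ξ (t m))‖) :=
    (Summable.tsum_finsetSum fun k _ => hGk k).symm
  set G : ℕ → ℝ := fun m => if m = n then (0:ℝ)
      else c m * ∑ k, ‖u (b k) (ξ (t m)) - u (a k) (ξ (t m))‖ with hGdef
  have hpull : ∀ m, (∑ k, (if m = n then (0:ℝ)
      else c m * ‖u (b k) (ξ (t m)) - u (a k) (ξ (t m))‖)) = G m := by
    intro m
    by_cases hmn : m = n
    · simp [hGdef, hmn]
    · simp only [hGdef, if_neg hmn]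
      rw [Finset.mul_sum]
  have hGnonneg : ∀ m, 0 ≤ G m := by
    intro m
    by_cases hmn : m = n
    · simp [hGdef, hmn]
    · simp only [hGdef, if_neg hmn]
      exact mul_nonneg (hcpos m).le (Finset.sum_nonneg fun k _ => norm_nonneg _)
  have hGle : ∀ m, G m ≤ C * c m := by
    intro m
    by_cases hmn : m = n
    · simp only [hGdef, if_pos hmn]
      exact mul_nonneg hCpos.le (hcpos m).le
    · simp only [hGdef, if_neg hmn]
      calc c m * (∑ k, ‖u (b k) (ξ (t m)) - u (a k) (ξ (t m))‖)
          ≤ c m * C := mul_le_mul_of_nonneg_left (hVC m) (hcpos m).le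
        _ = C * c m := mul_comm _ _
  have hGsum : Summable G := Summable.of_nonneg_of_le hGnonneg hGle (hcsum.mul_left C)
  -- bound the head of ∑' G
  have hgeom : ∀ M : ℕ, (∑ m ∈ Finset.range M, ((1:ℝ)/2)^(m+1)) = 1 - (1/2)^M := by
    intro M; induction M with
    | zero => simp
    | succ k ih => rw [Finset.sum_range_succ, ih]; ring
  have hhead : (∑ m ∈ Finset.range (n+1), G m) ≤ c n * εf (t n) / 8 := by
    have hterm : ∀ m ∈ Finset.range (n+1), G m ≤ (c n * εf (t n)/8) * (1/2)^(m+1) := by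
      intro m _
      by_cases hmn : m = n
      · rw [hGdef]
        simp only [hmn, if_pos rfl]
        exact mul_nonneg (div_nonneg (mul_nonneg hcn.le hεn.le) (by norm_num)) (by positivity)
      · have hmlt : m < n ∨ n < m := Ne.lt_or_gt hmn
        have hcm := hcpos m
        rw [hGdef]
        simp only [if_neg hmn]
        rcases hmlt with hmlt | hmlt
        · have h1 := hVsmall m hmlt
          have h2 : c m * (c n * εf (t n)/(8 * 2^(m+1) * c m)) =
              (c n * εf (t n)/8) * (1/2)^(m+1) := by
            field_simp
            ring_nf
            rw [← mul_pow]; norm_num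
          calc c m * (∑ k, ‖u (b k) (ξ (t m)) - u (a k) (ξ (t m))‖)
              ≤ c m * (c n * εf (t n)/(8 * 2^(m+1) * c m)) :=
                mul_le_mul_of_nonneg_left h1 hcm.le
            _ = (c n * εf (t n)/8) * (1/2)^(m+1) := h2
        · -- impossible since m ∈ range (n+1) and m ≠ n; but easy anyway via omega
          exfalso
          have := Finset.mem_range.1 ‹m ∈ Finset.range (n+1)›
          omega
    calc (∑ m ∈ Finset.range (n+1), G m)
        ≤ ∑ m ∈ Finset.range (n+1), (c n * εf (t n)/8) * (1/2)^(m+1) :=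
          Finset.sum_le_sum hterm
      _ = (c n * εf (t n)/8) * ∑ m ∈ Finset.range (n+1), ((1:ℝ)/2)^(m+1) := by
          rw [Finset.mul_sum]
      _ ≤ (c n * εf (t n)/8) * 1 := by
          refine mul_le_mul_of_nonneg_left ?_
            (div_nonneg (mul_nonneg hcn.le hεn.le) (by norm_num))
          rw [hgeom]
          have : (0:ℝ) ≤ (1/2)^(n+1) := by positivity
          linarith
      _ = c n * εf (t n) / 8 := mul_one _
  -- bound the tail of ∑' G
  have htail : (∑' i : ℕ, G (i + (n+1))) ≤ c n * εf (t n) / 8 := by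
    have hs1 : Summable (fun i => G (i + (n+1))) := (summable_nat_add_iff (n+1)).2 hGsum
    have hs2 : Summable (fun i => C * c (i + (n+1))) :=
      ((summable_nat_add_iff (n+1)).2 hcsum).mul_left C
    calc (∑' i : ℕ, G (i + (n+1))) ≤ ∑' i : ℕ, C * c (i + (n+1)) :=
          Summable.tsum_le_tsum (fun i => hGle (i + (n+1))) hs1 hs2
      _ = C * ∑' i : ℕ, c (i + (n+1)) := tsum_mul_left
      _ ≤ C * (2 * c (n+1)) := mul_le_mul_of_nonneg_left (hctail n) hCpos.le
      _ ≤ C * (2 * (c n * εf (t n)/(16*C))) := by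
          have := hcε n
          nlinarith [hCpos]
      _ = c n * εf (t n) / 8 := by
          field_simp
          ring
  have htot : (∑' m, G m) ≤ c n * εf (t n) / 4 := by
    have heq := Summable.sum_add_tsum_nat_add (f := G) (n+1) hGsum
    linarith [hhead, htail]
  -- Final contradiction.
  have hfin : c n * εf (t n) - c n * εf (t n)/4 ≤ ∑ k, ‖u (b k) x - u (a k) x‖ := by
    have h1 : c n * εf (t n) ≤ c n * (∑ k, ‖u (b k) (ξ (t n)) - u (a k) (ξ (t n))‖) :=
      mul_le_mul_of_nonneg_left hVn hcn.le
    have h2 := hsum1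
    rw [hswap, tsum_congr hpull] at h2
    linarith [htot]
  have hpos : 0 < c n * εf (t n) := mul_pos hcn hεn
  linarith [hSx, hfin]
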